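/- (Coarea formula for horizontal homomorphisms) Let L : ℍ → ℝ² be given by L(x) = M·(x¹,x²) for an invertible 2×2 real matrix M. Then for every Borel set U ⊆ ℍ, ∫_U |det M| dℒ³ = ∫_{ℝ²} 𝒮²_d(U ∩ L⁻¹(z)) dℒ²(z), where ℒ³ and ℒ² are Lebesgue measures and 𝒮²_d is the 2-dimensional spherical Hausdorff measure with respect to a homogeneous left-invariant distance d, normalized so that vertical lines {(z,t) : t ∈ ℝ} satisfy 𝒮²_d({(z,t) : t ∈ A}) = ℒ¹(A) for Borel A ⊆ ℝ. -/

import Mathlib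

open Set

abbrev Heis := ℝ × ℝ × ℝ

/-- Heisenberg group product. -/
def hmul (x y : Heis) : Heis :=
  (x.1 + y.1, x.2.1 + y.2.1, x.2.2 + y.2.2 + (x.1 * y.2.1 - x.2.1 * y.1))

/-- Heisenberg group inverse. -/
def hinv (x : Heis) : Heis := (-x.1, -x.2.1, -x.2.2)

/-- Intrinsic dilation. -/
def hdil (r : ℝ) (x : Heis) : Heis := (r * x.1, r * x.2.1, r ^ 2 * x.2.2)

/-- Horizontal components. -/
def hor (x : Heis) : ℝ × ℝ := (x.1, x.2.1)

/-- Horizontal gauge. -/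
noncomputable def gaugeH (x : Heis) : ℝ := Real.sqrt (x.1 ^ 2 + x.2.1 ^ 2)

/-- Vertical gauge. -/
noncomputable def gaugeV (x : Heis) : ℝ := Real.sqrt |x.2.2|

/-- The 2-dimensional spherical Hausdorff measure (as an outer measure value)
associated to a distance d on ℍ, with normalization constant βd. -/
noncomputable def sphHaus (d : Heis → Heis → ℝ) (βd : ℝ) (U : Set Heis) : ENNReal :=
  ⨆ ε ∈ Set.Ioi (0 : ℝ),
    sInf { m : ENNReal | ∃ (cent : ℕ → Heis) (rad : ℕ → ℝ),
      (∀ i, 0 ≤ rad i ∧ rad i ≤ ε) ∧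
      U ⊆ ⋃ i, { x | d (cent i) x < rad i } ∧
      m = ∑' i, ENNReal.ofReal (βd * rad i ^ 2) }

/-- Coarea formula for horizontal homomorphisms L(x) = M·(x¹,x²), M an
invertible linear map of ℝ²: for every Borel U ⊆ ℍ,
∫_U |det M| dℒ³ = ∫_{ℝ²} 𝒮²_d(U ∩ L⁻¹(z)) dℒ²(z), where 𝒮²_d is normalized so
that vertical lines are parametrized by arc length. -/
theorem coarea_horizontal_homomorphism
    (d : Heis → Heis → ℝ) (βd : ℝ) (hβd : 0 < βd)
    (hnorm : ∀ (v : ℝ × ℝ) (A : Set ℝ), MeasurableSet A →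
      sphHaus d βd { x : Heis | (x.1, x.2.1) = v ∧ x.2.2 ∈ A } =
        MeasureTheory.volume A)
    (e : (ℝ × ℝ) →ₗ[ℝ] ℝ × ℝ) (he : LinearMap.det e ≠ 0)
    (U : Set Heis) (hU : MeasurableSet U) :
    ENNReal.ofReal |LinearMap.det e| * MeasureTheory.volume U =
      ∫⁻ z : ℝ × ℝ, sphHaus d βd (U ∩ { x : Heis | e (x.1, x.2.1) = z }) := by
  classical
  set E := e.equivOfDetNeZero he with hE
  have hEe : ∀ w : ℝ × ℝ, E w = e w := fun w => rfl
  -- the set in `(ℝ×ℝ)×ℝ` corresponding to `U`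
  set W : Set ((ℝ × ℝ) × ℝ) := MeasurableEquiv.prodAssoc ⁻¹' U with hW
  have hWm : MeasurableSet W := MeasurableEquiv.prodAssoc.measurable hU
  -- slice function
  set G : ℝ × ℝ → ENNReal := fun v => MeasureTheory.volume (Prod.mk v ⁻¹' W) with hG
  have hGm : Measurable G := measurable_measure_prodMk_left hWm
  -- the inverse linear map
  set f : (ℝ × ℝ) →ₗ[ℝ] ℝ × ℝ := (E.symm : (ℝ × ℝ) →ₗ[ℝ] ℝ × ℝ) with hf
  have hfm : Measurable f := (LinearMap.continuous_of_finiteDimensional f).measurable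
  have hcomp : f.comp e = LinearMap.id := by
    ext w <;> simp [hf, ← hEe, E.symm_apply_apply]
  have hdetf : LinearMap.det f = (LinearMap.det e)⁻¹ := by
    have h1 : LinearMap.det f * LinearMap.det e = 1 := by
      rw [← LinearMap.det_comp, hcomp, LinearMap.det_id]
    field_simp at h1 ⊢
    linarith [h1]
  have hdetf' : LinearMap.det f ≠ 0 := by
    rw [hdetf]; exact inv_ne_zero he
  -- pointwise identification of slices
  have hslice : ∀ z : ℝ × ℝ,
      sphHaus d βd (U ∩ { x : Heis | e (x.1, x.2.1) = z }) = G (f z) := by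
    intro z
    have hset : U ∩ { x : Heis | e (x.1, x.2.1) = z } =
        { x : Heis | (x.1, x.2.1) = f z ∧ x.2.2 ∈ Prod.mk (f z) ⁻¹' W } := by
      ext x
      simp only [mem_inter_iff, mem_setOf_eq, mem_preimage, hW, hf]
      constructor
      · rintro ⟨hxU, hxz⟩
        have hv : (x.1, x.2.1) = E.symm z := by
          rw [← hxz, ← hEe, E.symm_apply_apply]
        refine ⟨hv, ?_⟩
        have h1 : x.1 = (E.symm z).1 := congrArg Prod.fst hv
        have h2 : x.2.1 = (E.symm z).2 := congrArg Prod.snd hv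
        simpa [MeasurableEquiv.prodAssoc, Equiv.prodAssoc, ← h1, ← h2] using hxU
      · rintro ⟨hv, hxW⟩
        have h1 : x.1 = (E.symm z).1 := congrArg Prod.fst hv
        have h2 : x.2.1 = (E.symm z).2 := congrArg Prod.snd hv
        constructor
        · simpa [MeasurableEquiv.prodAssoc, Equiv.prodAssoc, ← h1, ← h2] using hxW
        · rw [hv]; exact E.apply_symm_apply z
    rw [hset, hnorm _ _ (hWm.preimage measurable_prodMk_left)]
  -- rewrite the right-hand side
  have hRHS : (∫⁻ z : ℝ × ℝ, sphHaus d βd (U ∩ { x : Heis | e (x.1, x.2.1) = z }))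
      = ∫⁻ z, G (f z) := by
    exact MeasureTheory.lintegral_congr hslice
  rw [hRHS]
  -- change of variables via the linear map `f`
  have hmap : MeasureTheory.Measure.map f MeasureTheory.volume =
      ENNReal.ofReal |LinearMap.det e| • (MeasureTheory.volume : MeasureTheory.Measure (ℝ × ℝ)) := by
    rw [MeasureTheory.Measure.map_linearMap_addHaar_eq_smul_addHaar _ hdetf', hdetf]
    congr 1
    simp [abs_inv]
  have hchg : (∫⁻ z, G (f z)) =
      ENNReal.ofReal |LinearMap.det e| * ∫⁻ v, G v := by
    rw [← MeasureTheory.lintegral_map hGm hfm, hmap, MeasureTheory.lintegral_smul_measure, smul_eq_mul]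
  rw [hchg]
  congr 1
  -- Fubini: `volume U = ∫⁻ v, G v`
  have hpres : MeasureTheory.volume U = MeasureTheory.volume W := by
    have := (MeasureTheory.measurePreserving_prodAssoc
      (MeasureTheory.volume : MeasureTheory.Measure ℝ)
      (MeasureTheory.volume : MeasureTheory.Measure ℝ)
      (MeasureTheory.volume : MeasureTheory.Measure ℝ)).measure_preimage
      hU.nullMeasurableSet
    calc MeasureTheory.volume U
        = ((MeasureTheory.volume : MeasureTheory.Measure ℝ).prod
            ((MeasureTheory.volume : MeasureTheory.Measure ℝ).prod
              (MeasureTheory.volume : MeasureTheory.Measure ℝ))) U := by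
          rw [← MeasureTheory.Measure.volume_eq_prod _ _, ← MeasureTheory.Measure.volume_eq_prod _ _]
      _ = (((MeasureTheory.volume : MeasureTheory.Measure ℝ).prod
            (MeasureTheory.volume : MeasureTheory.Measure ℝ)).prod
              (MeasureTheory.volume : MeasureTheory.Measure ℝ)) W := this.symm
      _ = MeasureTheory.volume W := by
          rw [← MeasureTheory.Measure.volume_eq_prod _ _, ← MeasureTheory.Measure.volume_eq_prod _ _]
  rw [hpres, MeasureTheory.Measure.volume_eq_prod _ _, MeasureTheory.Measure.prod_apply hWm]
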